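/- The smallest pole ⫫ = {p : {p} ⊳ ∅} equals the union of the stratification ⫫₀ = ∅, ⫫_{r+1} = {p : ∃ Q ⊆ ⫫_r, {p} ⊳₁ Q}, where ⊳ is the smallest evaluation relation containing a generating relation ⊳₁ with singleton finite left-hand sides and finite right-hand sides. -/

import Mathlib

variable {Proc : Type*}

/-- A multi-evaluation relation over a one-step relation `step`. -/
def IsEvalRel (step : Proc → Proc → Prop) (R : Set Proc → Set Proc → Prop) : Prop :=
  (∀ p q : Proc, step p q → R {p} {q}) ∧
  (∀ p : Proc, R {p} {p}) ∧
  (∀ (P Q P' Q' : Set Proc) (r : Proc),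
    R P (Q ∪ {r}) → R (P' ∪ {r}) Q' → R (P ∪ P') (Q ∪ Q')) ∧
  (∀ P Q P' Q' : Set Proc, R P Q → P ⊆ P' → Q ⊆ Q' → R P' Q')

/-- A pole: a set of processes closed by anti-evaluation. -/
def IsPole (step : Proc → Proc → Prop) (po : Set Proc) : Prop :=
  ∀ p q : Proc, Relation.ReflTransGen step p q → q ∈ po → p ∈ po

/-- The multi-evaluation relation associated with a realizability structure `S`. -/
def relOf (S : Set (Set Proc)) (P Q : Set Proc) : Prop :=
  ∀ po ∈ S, Q ⊆ po → (P ∩ po).Nonempty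

/-- The realizability structure generated by a relation `R`. -/
def genStruct (step : Proc → Proc → Prop) (R : Set Proc → Set Proc → Prop) :
    Set (Set Proc) :=
  {po | IsPole step po ∧ ∀ P Q : Set Proc, R P Q → Q ⊆ po → (P ∩ po).Nonempty}

/-- The stratification `⫫₀ = ∅`, `⫫_{r+1} = {p | ∃ Q ⊆ ⫫_r, {p} ⊳₁ Q}`. -/
def strat {Proc : Type*} (R₁ : Set Proc → Set Proc → Prop) : ℕ → Set Proc
  | 0 => ∅
  | r + 1 => {p | ∃ Q : Set Proc, Q ⊆ strat R₁ r ∧ R₁ {p} Q}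

/-- The smallest pole `{p | {p} ⊳ ∅}` equals the union of the stratification: it is a
pole of the structure generated by `⊳`, is contained in every pole of that structure,
and coincides with `⋃ r, ⫫_r`. -/
theorem stmt_14 {Proc : Type*} (step : Proc → Proc → Prop)
    (hdet : ∀ p q q' : Proc, step p q → step p q' → q = q')
    (R₁ Rstar : Set Proc → Set Proc → Prop)
    (hstep : ∀ p q : Proc, step p q → R₁ {p} {q})
    (hfin : ∀ P Q : Set Proc, R₁ P Q → (∃ p : Proc, P = {p}) ∧ Q.Finite)
    (h₁ : IsEvalRel step Rstar) (h₂ : ∀ P Q, R₁ P Q → Rstar P Q)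
    (h₃ : ∀ R' : Set Proc → Set Proc → Prop, IsEvalRel step R' →
      (∀ P Q, R₁ P Q → R' P Q) → ∀ P Q, Rstar P Q → R' P Q) :
    (⋃ r, strat R₁ r) ∈ genStruct step Rstar ∧
      (∀ po ∈ genStruct step Rstar, (⋃ r, strat R₁ r) ⊆ po) ∧
      (⋃ r, strat R₁ r) = {p : Proc | Rstar {p} ∅} := by
  obtain ⟨hR0, hrefl, hcut, hweak⟩ := h₁
  set U := ⋃ r, strat R₁ r with hU
  have hmono' : Monotone (strat R₁) := by
    apply monotone_nat_of_le_succ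
    intro r
    induction r with
    | zero => simp [strat]
    | succ n ih =>
      rintro p ⟨Q, hQ, hR⟩
      exact ⟨Q, hQ.trans ih, hR⟩
  have hfinU : ∀ Q : Set Proc, Q.Finite → Q ⊆ U → ∃ N, Q ⊆ strat R₁ N := by
    intro Q hQf
    refine Set.Finite.induction_on (motive := fun Q _ => Q ⊆ U → ∃ N, Q ⊆ strat R₁ N) Q hQf (fun _ => ⟨0, by simp⟩) ?_
    intro a s _ _ ih hsub
    · 
      obtain ⟨N, hN⟩ := ih (fun q hq => hsub (Set.mem_insert_of_mem _ hq))
      obtain ⟨i, hi⟩ := Set.mem_iUnion.1 (hsub (Set.mem_insert _ _))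
      exact ⟨max N i, Set.insert_subset (hmono' (le_max_right N i) hi)
        (hN.trans (hmono' (le_max_left N i)))⟩
  have hcutfin : ∀ Q : Set Proc, Q.Finite → ∀ P, Rstar P Q →
      (∀ q ∈ Q, Rstar {q} ∅) → Rstar P ∅ := by
    intro Q hQf
    refine Set.Finite.induction_on
      (motive := fun Q _ => ∀ P, Rstar P Q → (∀ q ∈ Q, Rstar {q} ∅) → Rstar P ∅) Q hQf (fun P h _ => h) ?_
    intro a s _ _ ih P hPQ hq
    · 
      rw [Set.insert_eq, Set.union_comm] at hPQ
      have h2 : Rstar (∅ ∪ {a}) ∅ := by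
        simpa using hq a (Set.mem_insert _ _)
      have h3 := hcut P s ∅ ∅ a hPQ h2
      simp only [Set.union_empty] at h3
      exact ih P h3 (fun q hq' => hq q (Set.mem_insert_of_mem _ hq'))
  have stratA : ∀ r p, p ∈ strat R₁ r → Rstar {p} ∅ := by
    intro r
    induction r with
    | zero => intro p hp; exact absurd hp (Set.notMem_empty p)
    | succ n ih =>
      rintro p ⟨Q, hQ, hR⟩
      exact hcutfin Q (hfin _ _ hR).2 {p} (h₂ _ _ hR) (fun q hq => ih q (hQ hq))
  have stratA' : ∀ p ∈ U, Rstar {p} ∅ := by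
    intro p hp
    obtain ⟨r, hr⟩ := Set.mem_iUnion.1 hp
    exact stratA r p hr
  have hevalR' : IsEvalRel step (fun P Q => Q ⊆ U → (P ∩ U).Nonempty) := by
    refine ⟨?_, ?_, ?_, ?_⟩
    · intro p q hpq hq
      obtain ⟨i, hi⟩ := Set.mem_iUnion.1 (hq rfl)
      exact ⟨p, rfl, Set.mem_iUnion.2
        ⟨i + 1, ⟨{q}, Set.singleton_subset_iff.2 hi, hstep p q hpq⟩⟩⟩
    · intro p hp; exact ⟨p, rfl, hp rfl⟩
    · intro P Q P' Q' r hPQ hP'Q' hsub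
      have hQU : Q ⊆ U := Set.union_subset_iff.1 hsub |>.1
      have hQ'U : Q' ⊆ U := Set.union_subset_iff.1 hsub |>.2
      obtain ⟨x, hx1, hx2⟩ := hP'Q' hQ'U
      rcases hx1 with hx1 | hx1
      · exact ⟨x, Or.inr hx1, hx2⟩
      · have hrU : r ∈ U := by rwa [Set.mem_singleton_iff.1 hx1] at hx2
        obtain ⟨y, hy1, hy2⟩ := hPQ (Set.union_subset hQU
          (Set.singleton_subset_iff.2 hrU))
        exact ⟨y, Or.inl hy1, hy2⟩
    · intro P Q P' Q' hR hP hQ hQ'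
      obtain ⟨x, hx1, hx2⟩ := hR (hQ.trans hQ')
      exact ⟨x, hP hx1, hx2⟩
  have hcont : ∀ P Q, R₁ P Q → Q ⊆ U → (P ∩ U).Nonempty := by
    intro P Q hR hQU
    obtain ⟨⟨p, rfl⟩, hQf⟩ := hfin P Q hR
    obtain ⟨N, hN⟩ := hfinU Q hQf hQU
    exact ⟨p, rfl, Set.mem_iUnion.2 ⟨N + 1, ⟨Q, hN, hR⟩⟩⟩
  have hR' : ∀ P Q, Rstar P Q → Q ⊆ U → (P ∩ U).Nonempty :=
    h₃ _ hevalR' hcont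
  have stratB : ∀ p, Rstar {p} ∅ → p ∈ U := by
    intro p hp
    obtain ⟨x, hx1, hx2⟩ := hR' {p} ∅ hp (Set.empty_subset _)
    rwa [Set.mem_singleton_iff.1 hx1] at hx2
  have hpole : IsPole step U := by
    intro p q hpq hq
    induction hpq using Relation.ReflTransGen.head_induction_on with
    | refl => exact hq
    | head h _ ih =>
      obtain ⟨i, hi⟩ := Set.mem_iUnion.1 ih
      exact Set.mem_iUnion.2
        ⟨i + 1, ⟨_, Set.singleton_subset_iff.2 hi, hstep _ _ h⟩⟩
  refine ⟨⟨hpole, hR'⟩, ?_, ?_⟩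
  · intro po hpo p hp
    obtain ⟨x, hx1, hx2⟩ := hpo.2 {p} ∅ (stratA' p hp) (Set.empty_subset _)
    rwa [Set.mem_singleton_iff.1 hx1] at hx2
  · ext p
    exact ⟨fun hp => stratA' p hp, fun hp => stratB p hp⟩
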